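/- arXiv:1209.4497 — 4 statements merged into one kernel-verified Lean document; each statement's English description precedes it below -/
import Mathlib

section
/- With the setup of the model space H(Γ) for T ∈ S_n(H), the multiplication operator M_Γ f̂ := z·f̂ with domain {f̂ ∈ H(Γ) : z f̂ ∈ H(Γ)} satisfies U D(T) = D(M_Γ) and U T = M_Γ U, where (Uf)(z) = Γ(z)*f. Hence T is unitarily equivalent to M_Γ. -/
open scoped InnerProductSpace LinearPMap

/-- With `U f = Γ(·)* f` the unitary onto the model space `H(Γ)` of
`T`, the operator `M_Γ f̂ = z f̂` with domain `{f̂ : z f̂ ∈ H(Γ)}` satisfies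
`U D(T) = D(M_Γ)` and `U T = M_Γ U`: i.e. (i) for `f ∈ D(T)`,
`Γ(z)*(T f) = z·Γ(z)* f` for all non-real `z` (so `U f ∈ D(M_Γ)` and
`M_Γ U f = U T f`), and (ii) if `z·Γ(z)* f = Γ(z)* g` for some `g ∈ H` and all
non-real `z`, then `f ∈ D(T)`. Hence `T` is unitarily equivalent to `M_Γ`. -/
theorem stmt_7 {H K : Type*}
    [NormedAddCommGroup H] [InnerProductSpace ℂ H] [CompleteSpace H]
    [NormedAddCommGroup K] [InnerProductSpace ℂ K] [CompleteSpace K]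
    (T : H →ₗ.[ℂ] H) (hdense : Dense (T.domain : Set H))
    (hsym : ∀ x y : T.domain, ⟪T x, (y : H)⟫_ℂ = ⟪(x : H), T y⟫_ℂ)
    (hclosed : IsClosed (T.graph : Set (H × H)))
    (Γ : ℂ → (K →L[ℂ] H))
    (hker : ∀ z : ℂ, z.im ≠ 0 → ∀ f : H,
      (ContinuousLinearMap.adjoint (Γ z) f = 0 ↔ ∃ g : T.domain, T g - z • (g : H) = f))
    (hsimple : ∀ f : H,
      (∀ z : ℂ, z.im ≠ 0 → ContinuousLinearMap.adjoint (Γ z) f = 0) → f = 0) :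
    (∀ f : T.domain, ∀ z : ℂ, z.im ≠ 0 →
        ContinuousLinearMap.adjoint (Γ z) (T f)
          = z • ContinuousLinearMap.adjoint (Γ z) (f : H)) ∧
      ∀ f : H,
        (∃ g : H, ∀ z : ℂ, z.im ≠ 0 →
            z • ContinuousLinearMap.adjoint (Γ z) f
              = ContinuousLinearMap.adjoint (Γ z) g) →
          f ∈ T.domain := by
  -- Part (i)
  have part1 : ∀ f : T.domain, ∀ z : ℂ, z.im ≠ 0 →
      ContinuousLinearMap.adjoint (Γ z) (T f)
        = z • ContinuousLinearMap.adjoint (Γ z) (f : H) := by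
    intro f z hz
    have h0 : ContinuousLinearMap.adjoint (Γ z) (T f - z • (f : H)) = 0 :=
      (hker z hz _).mpr ⟨f, rfl⟩
    rw [map_sub, map_smul, sub_eq_zero] at h0
    exact h0
  refine ⟨part1, ?_⟩
  rintro f ⟨g, hg⟩
  -- symmetry lower bound
  have est : ∀ (v : T.domain) (w : ℂ), |w.im| * ‖(v : H)‖ ≤ ‖T v - w • (v : H)‖ := by
    intro v w
    rcases eq_or_ne (‖(v : H)‖) 0 with hv | hv
    · rw [hv, mul_zero]; exact norm_nonneg _
    have hre : (⟪(v : H), T v⟫_ℂ).im = 0 := by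
      have h2 : (starRingEnd ℂ) ⟪(v : H), T v⟫_ℂ = ⟪(v : H), T v⟫_ℂ := by
        rw [inner_conj_symm]; exact hsym v v
      exact Complex.conj_eq_iff_im.mp h2
    have hinner : (⟪(v : H), T v - w • (v : H)⟫_ℂ).im = - (w.im * ‖(v : H)‖ ^ 2) := by
      rw [inner_sub_right, inner_smul_right, inner_self_eq_norm_sq_to_K]
      simp [Complex.sub_im, Complex.mul_im, hre, ← Complex.ofReal_pow]
    have h3 : |w.im| * ‖(v : H)‖ ^ 2 = |(⟪(v : H), T v - w • (v : H)⟫_ℂ).im| := by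
      rw [hinner, abs_neg, abs_mul, abs_of_nonneg (by positivity : (0:ℝ) ≤ ‖(v:H)‖ ^ 2)]
    have h4 : |(⟪(v : H), T v - w • (v : H)⟫_ℂ).im| ≤ ‖(v : H)‖ * ‖T v - w • (v : H)‖ := by
      refine le_trans ?_ (norm_inner_le_norm (𝕜 := ℂ) _ _)
      exact Complex.abs_im_le_norm _
    have hv' : 0 < ‖(v : H)‖ := lt_of_le_of_ne (norm_nonneg _) (Ne.symm hv)
    nlinarith [h3, h4]
  set z : ℂ := Complex.I with hzdef
  have hz : z.im ≠ 0 := by simp [hzdef]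
  have h0 : ContinuousLinearMap.adjoint (Γ z) (g - z • f) = 0 := by
    rw [map_sub, map_smul, ← hg z hz, sub_self]
  obtain ⟨h, hh⟩ := (hker z hz _).mp h0
  -- claim: for nonreal w ≠ z, Γ(w)*(f - h) = 0
  have claim : ∀ w : ℂ, w.im ≠ 0 → w ≠ z →
      ContinuousLinearMap.adjoint (Γ w) (f - (h : H)) = 0 := by
    intro w hw hwz
    have e1 : ContinuousLinearMap.adjoint (Γ w) (T h - z • (h : H))
        = ContinuousLinearMap.adjoint (Γ w) (g - z • f) := by rw [hh]
    rw [map_sub, map_sub, map_smul, map_smul, part1 h w hw, ← hg w hw] at e1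
    have e2 : (w - z) • (ContinuousLinearMap.adjoint (Γ w) (f : H)
        - ContinuousLinearMap.adjoint (Γ w) (h : H)) = 0 := by
      rw [smul_sub, sub_smul, sub_smul]
      rw [sub_eq_zero]
      linear_combination (norm := module) -e1
    rcases smul_eq_zero.mp e2 with hc | hc
    · exact absurd (sub_eq_zero.mp hc) hwz
    · rw [map_sub]; exact hc
  -- at w = z, use the approximation argument
  have key : ∀ ε : ℝ, 0 < ε →
      ‖ContinuousLinearMap.adjoint (Γ z) (f - (h : H))‖
        ≤ ε * (‖ContinuousLinearMap.adjoint (Γ z)‖ * ‖f - (h : H)‖) := by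
    intro ε hε
    set w : ℂ := z + (ε : ℂ) with hwdef
    have hwim : w.im = 1 := by simp [hwdef, hzdef]
    have hw : w.im ≠ 0 := by rw [hwim]; norm_num
    have hwz : w ≠ z := by
      intro hc
      have : (ε : ℂ) = 0 := by
        have := hc; rw [hwdef] at this; linear_combination this
      exact hε.ne' (by exact_mod_cast this)
    obtain ⟨q, hq⟩ := (hker w hw _).mp (claim w hw hwz)
    have hnq : ‖(q : H)‖ ≤ ‖f - (h : H)‖ := by
      have := est q w
      rw [hq, hwim] at this
      simpa using this
    have e3 : ContinuousLinearMap.adjoint (Γ z) (f - (h : H))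
        = (z - w) • ContinuousLinearMap.adjoint (Γ z) (q : H) := by
      rw [← hq, map_sub, map_smul, part1 q z hz]
      module
    have hzw : ‖z - w‖ = ε := by
      have : z - w = -(ε : ℂ) := by rw [hwdef]; ring
      rw [this, norm_neg, Complex.norm_real, Real.norm_eq_abs, abs_of_pos hε]
    rw [e3, norm_smul, hzw]
    have hb : ‖ContinuousLinearMap.adjoint (Γ z) (q : H)‖
        ≤ ‖ContinuousLinearMap.adjoint (Γ z)‖ * ‖(q : H)‖ :=
      ContinuousLinearMap.le_opNorm _ _
    have hb2 : ‖ContinuousLinearMap.adjoint (Γ z)‖ * ‖(q : H)‖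
        ≤ ‖ContinuousLinearMap.adjoint (Γ z)‖ * ‖f - (h : H)‖ :=
      mul_le_mul_of_nonneg_left hnq (norm_nonneg _)
    exact mul_le_mul_of_nonneg_left (le_trans hb hb2) hε.le
  have final : ContinuousLinearMap.adjoint (Γ z) (f - (h : H)) = 0 := by
    set C : ℝ := ‖ContinuousLinearMap.adjoint (Γ z)‖ * ‖f - (h : H)‖ with hC
    have hC0 : 0 ≤ C := by positivity
    by_contra hne
    have hpos : 0 < ‖ContinuousLinearMap.adjoint (Γ z) (f - (h : H))‖ :=
      norm_pos_iff.mpr hne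
    set X : ℝ := ‖ContinuousLinearMap.adjoint (Γ z) (f - (h : H))‖ with hX
    have hεpos : 0 < X / (C + 1) := by positivity
    have h5 := key _ hεpos
    have h6 : X / (C + 1) * (C + 1) = X := div_mul_cancel₀ _ (by positivity)
    nlinarith [h5, h6, hεpos]
  have hzero : f - (h : H) = 0 := by
    apply hsimple
    intro w hw
    rcases eq_or_ne w z with rfl | hwz
    · exact final
    · exact claim w hw hwz
  have : f = (h : H) := sub_eq_zero.mp hzero
  rw [this]
  exact h.2
end

section
/- Define on the model space H(Γ) the operators L := (1/b)(I − P_i) and R := b(I − P_{−i}), where b(z) = (z−i)/(z+i) and P_{±i} are the orthogonal projections onto the orthogonal complements of {f ∈ H(Γ) : f(±i) = 0}. Then L and R are bounded and L* = R. -/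
open scoped InnerProductSpace

/-- On the model space `H(Γ)` (an abstract complex Hilbert space `E`
here), let `P₊, P₋` be the orthogonal projections onto `{f : f(i)=0}ᗮ`, `{f : f(−i)=0}ᗮ`
respectively, and let `C` be the Cayley transform (multiplication by `b`), which is
isometric on `Rng(I−P₋)`.  The operators `L = (1/b)(I−P₊)` and `R = b(I−P₋)` (bounded,
by the closed graph theorem), characterized by `C(Lf) = f − P₊f`, `P₋(Lf) = 0`,
`Rg = C(g − P₋g)`, `P₊(Rg) = 0`, satisfy `L* = R`:  `⟨Lf, g⟩ = ⟨f, Rg⟩` for all `f, g`. -/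
theorem stmt_8 {E : Type*} [NormedAddCommGroup E] [InnerProductSpace ℂ E]
    [CompleteSpace E]
    (Pp Pm L R C : E →L[ℂ] E)
    (hPp_proj : Pp ∘L Pp = Pp) (hPp_sa : ContinuousLinearMap.adjoint Pp = Pp)
    (hPm_proj : Pm ∘L Pm = Pm) (hPm_sa : ContinuousLinearMap.adjoint Pm = Pm)
    (hC_isom : ∀ x y : E, ⟪C (x - Pm x), C (y - Pm y)⟫_ℂ = ⟪x - Pm x, y - Pm y⟫_ℂ)
    (hL1 : ∀ f : E, C (L f) = f - Pp f)
    (hL2 : ∀ f : E, Pm (L f) = 0)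
    (hR : ∀ g : E, R g = C (g - Pm g))
    (hRfin : ∀ g : E, Pp (R g) = 0) :
    ContinuousLinearMap.adjoint L = R ∧ ∀ f g : E, ⟪L f, g⟫_ℂ = ⟪f, R g⟫_ℂ := by
  have key : ∀ f g : E, ⟪L f, g⟫_ℂ = ⟪f, R g⟫_ℂ := by
    intro f g
    have hPm_inner : ⟪L f, Pm g⟫_ℂ = 0 := by
      have : ⟪L f, Pm g⟫_ℂ = ⟪Pm (L f), g⟫_ℂ := by
        rw [← ContinuousLinearMap.adjoint_inner_left, hPm_sa]
      rw [this, hL2, inner_zero_left]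
    have hPp_inner : ⟪Pp f, R g⟫_ℂ = 0 := by
      have : ⟪Pp f, R g⟫_ℂ = ⟪f, Pp (R g)⟫_ℂ := by
        rw [← ContinuousLinearMap.adjoint_inner_right, hPp_sa]
      rw [this, hRfin, inner_zero_right]
    have h1 : ⟪L f, g⟫_ℂ = ⟪L f, g - Pm g⟫_ℂ := by
      rw [inner_sub_right, hPm_inner, sub_zero]
    have h2 : ⟪L f - Pm (L f), g - Pm g⟫_ℂ = ⟪L f, g - Pm g⟫_ℂ := by
      rw [hL2, sub_zero]
    have h3 : ⟪C (L f - Pm (L f)), C (g - Pm g)⟫_ℂ = ⟪L f, g - Pm g⟫_ℂ := by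
      rw [hC_isom, h2]
    have h4 : C (L f - Pm (L f)) = f - Pp f := by
      rw [hL2, sub_zero, hL1]
    rw [h1, ← h3, h4, ← hR, inner_sub_left, hPp_inner, sub_zero]
  refine ⟨?_, key⟩
  symm
  rw [ContinuousLinearMap.eq_adjoint_iff]
  intro x y
  rw [← inner_conj_symm, ← key, inner_conj_symm]
end

section
/- Let K_λ(z) be the kernel of the model space of T ∈ S_n(H), with Φ(z) = K_i(z)K_i(i)^{−1/2}, Ψ(z) = K_{−i}(z)K_{−i}(−i)^{−1/2}, and V(z) = b(z)Φ(z)^{−1}Ψ(z) where b(z) = (z−i)/(z+i). Then for each z in the upper half-plane, V(z) : K → K is a strict contraction: ‖V(z)‖ < 1. -/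
set_option maxHeartbeats 800000


open scoped InnerProductSpace

open ContinuousLinearMap in
/-- Fix `z` in the upper half-plane, let `b(z) = (z−i)/(z+i)`, and let
`K_z(z), Φ(z), Ψ(z)` be the operators on `K` arising from the model-space kernel, so that
(i) `⟨K_z(z)a, a⟩ ≥ ε‖a‖²` for some `ε > 0` (the kernel is bounded below), and
(ii) `K_z(z) = (Φ(z)Φ(z)* − |b(z)|²Ψ(z)Ψ(z)*)/(1 − |b(z)|²)`.
Then `V(z) = b(z)Φ(z)^{−1}Ψ(z)` is a strict contraction: `‖V(z)‖ < 1`. -/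
theorem stmt_11 {K : Type*} [NormedAddCommGroup K] [InnerProductSpace ℂ K]
    [CompleteSpace K]
    (z : ℂ) (hz : 0 < z.im)
    (Kzz Φz Ψz Φzinv : K →L[ℂ] K)
    (hΦinv₁ : Φz ∘L Φzinv = 1) (hΦinv₂ : Φzinv ∘L Φz = 1)
    (ε : ℝ) (hε : 0 < ε)
    (hbound : ∀ a : K, ε * ‖a‖ ^ 2 ≤ (⟪Kzz a, a⟫_ℂ).re)
    (hker : Kzz = (1 - ‖(z - Complex.I) / (z + Complex.I)‖ ^ 2)⁻¹ •
        (Φz ∘L adjoint Φz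
          - ‖(z - Complex.I) / (z + Complex.I)‖ ^ 2 • (Ψz ∘L adjoint Ψz))) :
    ‖((z - Complex.I) / (z + Complex.I)) • (Φzinv ∘L Ψz)‖ < 1 := by
  set b : ℂ := (z - Complex.I) / (z + Complex.I) with hbdef
  have hzI : z + Complex.I ≠ 0 := by
    intro h
    have h' : (z + Complex.I).im = 0 := by rw [h]; simp
    simp [Complex.add_im] at h'
    linarith
  have hblt : ‖b‖ < 1 := by
    rw [hbdef, norm_div, div_lt_one (norm_pos_iff.mpr hzI)]
    have h2 : ‖z - Complex.I‖ ^ 2 < ‖z + Complex.I‖ ^ 2 := by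
      rw [Complex.sq_norm, Complex.sq_norm]
      simp [Complex.normSq_apply, Complex.sub_re, Complex.sub_im, Complex.add_re,
        Complex.add_im]
      nlinarith
    nlinarith [norm_nonneg (z - Complex.I), norm_nonneg (z + Complex.I)]
  clear_value b
  set β : ℝ := ‖b‖ ^ 2 with hβdef
  have hβ0 : 0 ≤ β := by rw [hβdef]; positivity
  have hβ1 : β < 1 := by rw [hβdef]; nlinarith [norm_nonneg b]
  have h1β : 0 < 1 - β := by linarith
  clear_value β
  -- key inequality
  have key : ∀ a : K, ε * (1 - β) * ‖a‖ ^ 2 + β * ‖adjoint Ψz a‖ ^ 2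
      ≤ ‖adjoint Φz a‖ ^ 2 := by
    intro a
    have h1 := hbound a
    have e2 : ⟪Φz (adjoint Φz a), a⟫_ℂ = (‖adjoint Φz a‖ ^ 2 : ℝ) := by
      rw [← adjoint_inner_right, inner_self_eq_norm_sq_to_K]
      norm_cast
    have e3 : ⟪Ψz (adjoint Ψz a), a⟫_ℂ = (‖adjoint Ψz a‖ ^ 2 : ℝ) := by
      rw [← adjoint_inner_right, inner_self_eq_norm_sq_to_K]
      norm_cast
    have e0 : ((1 - β)⁻¹ • (Φz ∘L adjoint Φz - β • (Ψz ∘L adjoint Ψz)))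
        = (((1 - β)⁻¹ : ℝ) : ℂ) • (Φz ∘L adjoint Φz - ((β : ℝ) : ℂ) • (Ψz ∘L adjoint Ψz)) := by
      simp only [RCLike.real_smul_eq_coe_smul (K := ℂ)]
      norm_cast
    have hKa : (⟪Kzz a, a⟫_ℂ).re
        = (1 - β)⁻¹ * (‖adjoint Φz a‖ ^ 2 - β * ‖adjoint Ψz a‖ ^ 2) := by
      rw [hker, e0, smul_apply, sub_apply, comp_apply, smul_apply, comp_apply,
        inner_smul_left, inner_sub_left, inner_smul_left, e2, e3,
        Complex.conj_ofReal, Complex.conj_ofReal]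
      rw [show ((β:ℂ) * (‖adjoint Ψz a‖ ^ 2 : ℝ) : ℂ) = ((β * ‖adjoint Ψz a‖ ^ 2 : ℝ) : ℂ) by push_cast; ring]
      rw [← Complex.ofReal_sub, ← Complex.ofReal_mul, Complex.ofReal_re]
    rw [hKa, inv_mul_eq_div, le_div_iff₀ h1β] at h1
    nlinarith
  clear hbound hker hΦinv₁
  -- trivial case
  by_cases hsub : Subsingleton K
  · have h0 : (b • (Φzinv ∘L Ψz)) = 0 := Subsingleton.elim _ _
    rw [h0, norm_zero]; norm_num
  have : Nontrivial K := not_subsingleton_iff_nontrivial.mp hsub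
  obtain ⟨x₀, hx₀⟩ := exists_ne (0 : K)
  have hadj1 : adjoint Φz ∘L adjoint Φzinv = 1 := by
    have h := congrArg (fun A => ContinuousLinearMap.adjoint A) hΦinv₂
    simp only [adjoint_comp] at h
    rw [h, ContinuousLinearMap.one_def, adjoint_id]
  have hsec : ∀ x : K, adjoint Φz (adjoint Φzinv x) = x := by
    intro x
    rw [← comp_apply, hadj1, ContinuousLinearMap.one_apply]
  set M : ℝ := ‖adjoint Φz‖ with hMdef
  have hMle : ∀ x : K, ‖adjoint Φz x‖ ≤ M * ‖x‖ := fun x => le_opNorm _ _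
  have hM : 0 < M := by
    rw [hMdef, norm_pos_iff]
    intro h0
    apply hx₀
    have h := hsec x₀
    rw [h0] at h
    simpa using h.symm
  clear_value M
  have hainv : ∀ x : K, x ≠ 0 → 0 < ‖adjoint Φzinv x‖ := by
    intro x hx
    rw [norm_pos_iff]
    intro h
    apply hx
    have h' := hsec x
    rw [h] at h'
    simpa using h'.symm
  set c : ℝ := 1 - ε * (1 - β) / M ^ 2 with hcdef
  have hc0 : 0 ≤ c := by
    have h1 := key (adjoint Φzinv x₀)
    have hax : ‖adjoint Φz (adjoint Φzinv x₀)‖ = ‖x₀‖ := by rw [hsec]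
    have h2 := hMle (adjoint Φzinv x₀)
    have ha0 := hainv x₀ hx₀
    rw [hax] at h1 h2
    have h4 : ε * (1 - β) ≤ M ^ 2 := by
      nlinarith [norm_nonneg (adjoint Ψz (adjoint Φzinv x₀)), norm_nonneg x₀, hβ0, mul_pos ha0 ha0, sq_nonneg ‖adjoint Ψz (adjoint Φzinv x₀)‖]
    rw [hcdef, sub_nonneg, div_le_one (by positivity)]
    exact h4
  have hc1 : c < 1 := by
    rw [hcdef]
    have : 0 < ε * (1 - β) / M ^ 2 := by positivity
    linarith
  clear_value c
  -- bound the adjoint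
  have hWadj : ‖b • (Φzinv ∘L Ψz)‖
      = ‖(starRingEnd ℂ b) • (adjoint Ψz ∘L adjoint Φzinv)‖ := by
    rw [← LinearIsometryEquiv.norm_map (ContinuousLinearMap.adjoint) (b • (Φzinv ∘L Ψz))]
    congr 1
    rw [LinearIsometryEquiv.map_smulₛₗ, adjoint_comp]
  rw [hWadj]
  have hbnd : ∀ x : K, ‖((starRingEnd ℂ b) • (adjoint Ψz ∘L adjoint Φzinv)) x‖
      ≤ Real.sqrt c * ‖x‖ := by
    intro x
    have h1 := key (adjoint Φzinv x)
    have hax : ‖adjoint Φz (adjoint Φzinv x)‖ = ‖x‖ := by rw [hsec]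
    have h2 := hMle (adjoint Φzinv x)
    rw [hax] at h1 h2
    have hval : ‖((starRingEnd ℂ b) • (adjoint Ψz ∘L adjoint Φzinv)) x‖ ^ 2
        = β * ‖adjoint Ψz (adjoint Φzinv x)‖ ^ 2 := by
      rw [smul_apply, norm_smul, comp_apply, mul_pow, hβdef, RCLike.norm_conj]
    have hineq : ‖((starRingEnd ℂ b) • (adjoint Ψz ∘L adjoint Φzinv)) x‖ ^ 2
        ≤ c * ‖x‖ ^ 2 := by
      rw [hval]
      have h3 : ε * (1 - β) / M ^ 2 * ‖x‖ ^ 2 ≤ ε * (1 - β) * ‖adjoint Φzinv x‖ ^ 2 := by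
        rw [div_mul_eq_mul_div, div_le_iff₀ (by positivity)]
        nlinarith [norm_nonneg x, norm_nonneg (adjoint Φzinv x), mul_le_mul h2 h2 (norm_nonneg x) (by positivity : (0:ℝ) ≤ M * ‖adjoint Φzinv x‖), mul_nonneg hε.le h1β.le]
      rw [hcdef]
      nlinarith
    have hn : ‖((starRingEnd ℂ b) • (adjoint Ψz ∘L adjoint Φzinv)) x‖
        ≤ Real.sqrt (c * ‖x‖ ^ 2) := by
      rw [← Real.sqrt_sq (norm_nonneg _)]
      exact Real.sqrt_le_sqrt hineq
    calc ‖((starRingEnd ℂ b) • (adjoint Ψz ∘L adjoint Φzinv)) x‖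
        ≤ Real.sqrt (c * ‖x‖ ^ 2) := hn
      _ = Real.sqrt c * ‖x‖ := by
          rw [Real.sqrt_mul hc0, Real.sqrt_sq (norm_nonneg _)]
  have hop : ‖(starRingEnd ℂ b) • (adjoint Ψz ∘L adjoint Φzinv)‖ ≤ Real.sqrt c :=
    opNorm_le_bound _ (Real.sqrt_nonneg c) hbnd
  have hs : Real.sqrt c < 1 := by
    rw [show (1 : ℝ) = Real.sqrt 1 from (Real.sqrt_one).symm]
    exact Real.sqrt_lt_sqrt hc0 (by simpa using hc1)
  linarith
end

section
/- With V(z) = b(z)Φ(z)^{−1}Ψ(z) as above (the Livsic characteristic function of T, up to unitaries), one has V(z) V(z̄)* = I for all non-real z at which V(z) and V(z̄) are defined and invertible. -/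
open scoped InnerProductSpace

/-- The Blaschke factor `b(z) = (z−i)/(z+i)` of the upper half-plane. -/
noncomputable def blaschke (z : ℂ) : ℂ := (z - Complex.I) / (z + Complex.I)

open ContinuousLinearMap Filter Topology in
lemma stmt13_conj_blaschke {z : ℂ} (hzI : z ≠ Complex.I) :
    (starRingEnd ℂ) (blaschke ((starRingEnd ℂ) z)) = (z + Complex.I) / (z - Complex.I) := by
  simp only [blaschke, map_div₀, map_sub, map_add, Complex.conj_conj, Complex.conj_I,
    sub_neg_eq_add]
  ring_nf

open ContinuousLinearMap Filter Topology in
lemma stmt13_ne_one {z w : ℂ} (hzI : z ≠ Complex.I) (hzI' : z ≠ -Complex.I)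
    (hw : w ≠ z) :
    (starRingEnd ℂ) (blaschke ((starRingEnd ℂ) z)) * blaschke w ≠ 1 := by
  have hz1 : z - Complex.I ≠ 0 := sub_ne_zero.mpr hzI
  have hz2 : z + Complex.I ≠ 0 := fun h => hzI' (by linear_combination h)
  rw [stmt13_conj_blaschke hzI]
  by_cases hwI : w = -Complex.I
  · have : w + Complex.I = 0 := by rw [hwI]; ring
    simp [blaschke, this]
  · have hw2 : w + Complex.I ≠ 0 := fun h => hwI (by linear_combination h)
    intro h
    rw [blaschke, div_mul_div_comm, div_eq_one_iff_eq (mul_ne_zero hz1 hw2)] at h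
    have h2 : 2 * Complex.I * (w - z) = 0 := by linear_combination h
    have : w - z = 0 := by
      rcases mul_eq_zero.mp h2 with h3 | h3
      · exact absurd h3 (by simp [Complex.I_ne_zero])
      · exact h3
    exact hw (by linear_combination this)

open ContinuousLinearMap Filter Topology in
lemma stmt13_key {K : Type*} [NormedAddCommGroup K] [InnerProductSpace ℂ K]
    [CompleteSpace K]
    (Kmap : ℂ → ℂ → (K →L[ℂ] K)) (Φ Φinv V : ℂ → (K →L[ℂ] K))
    (hΦ : ∀ z : ℂ, z.im ≠ 0 → Φ z ∘L Φinv z = 1 ∧ Φinv z ∘L Φ z = 1)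
    (hfact : ∀ lam z : ℂ, lam.im ≠ 0 → z.im ≠ 0 →
      (starRingEnd ℂ) (blaschke lam) * blaschke z ≠ 1 →
      Kmap lam z = Φ z ∘L
        (((1 : ℂ) - (starRingEnd ℂ) (blaschke lam) * blaschke z)⁻¹ •
          (1 - V z ∘L adjoint (V lam))) ∘L adjoint (Φ lam))
    (hKcont : ∀ lam : ℂ, lam.im ≠ 0 → ContinuousOn (Kmap lam) {w : ℂ | w.im ≠ 0})
    (hVcont : ContinuousOn V {w : ℂ | w.im ≠ 0})
    (hΦcont : ContinuousOn Φ {w : ℂ | w.im ≠ 0})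
    {z : ℂ} (hz : z.im ≠ 0) (hzI : z ≠ Complex.I) (hzI' : z ≠ -Complex.I) :
    V z ∘L adjoint (V ((starRingEnd ℂ) z)) = 1 := by
  set s : Set ℂ := {w : ℂ | w.im ≠ 0} with hs
  have hzs : z ∈ s := hz
  have hzb : ((starRingEnd ℂ) z).im ≠ 0 := by
    simpa [Complex.conj_im] using hz
  set zb : ℂ := (starRingEnd ℂ) z with hzbdef
  set c : ℂ → ℂ := fun w => (starRingEnd ℂ) (blaschke zb) * blaschke w with hc
  set F : ℂ → (K →L[ℂ] K) :=
    fun w => Φ w ∘L ((1 : K →L[ℂ] K) - V w ∘L adjoint (V zb)) ∘L adjoint (Φ zb) with hF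
  set t : Set ℂ := {w : ℂ | w.im ≠ 0 ∧ w ≠ z} with ht
  -- the filter
  have hts : t = {w : ℂ | w ≠ z} ∩ s := by
    ext w; simp [ht, hs, and_comm]
  have hsopen : IsOpen s := isOpen_compl_singleton.preimage Complex.continuous_im
  have hlt : 𝓝[t] z = 𝓝[{w : ℂ | w ≠ z}] z := by
    rw [hts]
    exact nhdsWithin_inter_of_mem'
      (mem_nhdsWithin_of_mem_nhds (hsopen.mem_nhds hzs))
  have hne : (𝓝[t] z).NeBot := by
    rw [hlt]
    show (𝓝[≠] z).NeBot
    infer_instance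
  -- On `t`, `F` agrees with `(1 - c w) • Kmap zb w`
  have hFeq : ∀ w ∈ t, F w = (1 - c w) • Kmap zb w := by
    intro w hw
    have hcne : c w ≠ 1 := stmt13_ne_one hzI hzI' hw.2
    rw [hfact zb w hzb hw.1 hcne]
    simp only [hF, ContinuousLinearMap.comp_smul, ContinuousLinearMap.smul_comp, smul_smul]
    rw [mul_inv_cancel₀ (sub_ne_zero.mpr hcne.symm), one_smul]
  -- `F` tends to `F z` along `𝓝[t] z`
  have hVA : ContinuousOn (fun w => V w ∘L adjoint (V zb)) s :=
    hVcont.clm_comp continuousOn_const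
  have hX : ContinuousOn (fun w => (1 : K →L[ℂ] K) - V w ∘L adjoint (V zb)) s :=
    continuousOn_const.sub hVA
  have hFcont : ContinuousOn F s :=
    hΦcont.clm_comp (hX.clm_comp continuousOn_const)
  have htsub : t ⊆ s := fun w hw => hw.1
  have hFt : Tendsto F (𝓝[t] z) (𝓝 (F z)) :=
    (hFcont z hzs).mono_left (nhdsWithin_mono z htsub)
  -- `(1 - c ·) • Kmap zb ·` tends to `0` along `𝓝[t] z`
  have hcz : c z = 1 := by
    have hz1 : z - Complex.I ≠ 0 := sub_ne_zero.mpr hzI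
    have hz2 : z + Complex.I ≠ 0 := fun h => hzI' (by linear_combination h)
    show (starRingEnd ℂ) (blaschke zb) * blaschke z = 1
    rw [hzbdef, stmt13_conj_blaschke hzI]
    rw [blaschke]
    field_simp
  have hccont : ContinuousAt c z := by
    have hz2 : z + Complex.I ≠ 0 := fun h => hzI' (by linear_combination h)
    have : ContinuousAt blaschke z := by
      exact ((continuousAt_id.sub continuousAt_const).div
        (continuousAt_id.add continuousAt_const) hz2)
    exact continuousAt_const.mul this
  have hct : Tendsto (fun w => (1 : ℂ) - c w) (𝓝[t] z) (𝓝 0) := by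
    have : Tendsto (fun w => (1 : ℂ) - c w) (𝓝 z) (𝓝 ((1 : ℂ) - c z)) :=
      tendsto_const_nhds.sub hccont
    rw [hcz, sub_self] at this
    exact this.mono_left nhdsWithin_le_nhds
  have hKt : Tendsto (Kmap zb) (𝓝[t] z) (𝓝 (Kmap zb z)) :=
    ((hKcont zb hzb) z hzs).mono_left (nhdsWithin_mono z htsub)
  have hGt : Tendsto (fun w => (1 - c w) • Kmap zb w) (𝓝[t] z) (𝓝 (0 : K →L[ℂ] K)) := by
    have := hct.smul hKt
    rwa [zero_smul] at this
  -- uniqueness of limits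
  have hF0 : F z = 0 := by
    have hFG : F =ᶠ[𝓝[t] z] fun w => (1 - c w) • Kmap zb w :=
      eventually_mem_nhdsWithin.mono hFeq
    exact tendsto_nhds_unique (hFt.congr' hFG) hGt
  -- unwind the invertible factors
  have hΦz := hΦ z hz
  have hΦzb := hΦ zb hzb
  have key : (1 : K →L[ℂ] K) - V z ∘L adjoint (V zb) = 0 := by
    have h1 : Φinv z ∘L F z ∘L adjoint (Φinv zb) = 0 := by
      rw [hF0]; simp
    rw [hF] at h1
    have h2 : Φinv z ∘L (Φ z ∘L ((1 : K →L[ℂ] K) - V z ∘L adjoint (V zb)) ∘L adjoint (Φ zb))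
        ∘L adjoint (Φinv zb)
        = (1 : K →L[ℂ] K) - V z ∘L adjoint (V zb) := by
      have hadj : adjoint (Φ zb) ∘L adjoint (Φinv zb) = 1 := by
        rw [← adjoint_comp, hΦzb.2, ContinuousLinearMap.one_def, adjoint_id,
          ← ContinuousLinearMap.one_def]
      calc Φinv z ∘L (Φ z ∘L ((1 : K →L[ℂ] K) - V z ∘L adjoint (V zb)) ∘L adjoint (Φ zb))
            ∘L adjoint (Φinv zb)
          = (Φinv z ∘L Φ z) ∘L ((1 : K →L[ℂ] K) - V z ∘L adjoint (V zb)) ∘L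
            (adjoint (Φ zb) ∘L adjoint (Φinv zb)) := by
            simp only [ContinuousLinearMap.comp_assoc]
        _ = (1 : K →L[ℂ] K) - V z ∘L adjoint (V zb) := by
            rw [hΦz.2, hadj]
            simp [ContinuousLinearMap.one_def]
    rw [h2] at h1
    exact h1
  have := sub_eq_zero.mp key
  exact this.symm

open Filter Topology in
open ContinuousLinearMap in
/-- Suppose the (continuous) operator-valued functions `Kmap`, `Φ`, `V`
on `ℂ∖ℝ` satisfy the factorization
`K_λ(z) = Φ(z)·[(I − V(z)V(λ)*)/(1 − conj(b(λ))b(z))]·Φ(λ)*` whenever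
`conj(b(λ))b(z) ≠ 1`, with each `Φ(z)` invertible.  Then (since the kernel stays bounded
as `z → λ̄` while the denominator vanishes) `V(z)V(z̄)* = I` for all non-real `z`. -/
theorem stmt_13 {K : Type*} [NormedAddCommGroup K] [InnerProductSpace ℂ K]
    [CompleteSpace K]
    (Kmap : ℂ → ℂ → (K →L[ℂ] K)) (Φ Φinv V : ℂ → (K →L[ℂ] K))
    (hΦ : ∀ z : ℂ, z.im ≠ 0 → Φ z ∘L Φinv z = 1 ∧ Φinv z ∘L Φ z = 1)
    (hfact : ∀ lam z : ℂ, lam.im ≠ 0 → z.im ≠ 0 →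
      (starRingEnd ℂ) (blaschke lam) * blaschke z ≠ 1 →
      Kmap lam z = Φ z ∘L
        (((1 : ℂ) - (starRingEnd ℂ) (blaschke lam) * blaschke z)⁻¹ •
          (1 - V z ∘L adjoint (V lam))) ∘L adjoint (Φ lam))
    (hKcont : ∀ lam : ℂ, lam.im ≠ 0 → ContinuousOn (Kmap lam) {w : ℂ | w.im ≠ 0})
    (hVcont : ContinuousOn V {w : ℂ | w.im ≠ 0})
    (hΦcont : ContinuousOn Φ {w : ℂ | w.im ≠ 0}) :
    ∀ z : ℂ, z.im ≠ 0 → V z ∘L adjoint (V ((starRingEnd ℂ) z)) = 1 := by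
  intro z hz
  by_cases hzi : z = Complex.I ∨ z = -Complex.I
  · -- at the exceptional points `±i`, argue by continuity from nearby points
    set s : Set ℂ := {w : ℂ | w.im ≠ 0} with hs
    set s' : Set ℂ := {w : ℂ | w.im ≠ 0 ∧ w ≠ Complex.I ∧ w ≠ -Complex.I} with hs'
    have hval : ∀ w ∈ s', V w ∘L adjoint (V ((starRingEnd ℂ) w)) = 1 := fun w hw =>
      stmt13_key Kmap Φ Φinv V hΦ hfact hKcont hVcont hΦcont hw.1 hw.2.1 hw.2.2
    set f : ℂ → (K →L[ℂ] K) := fun w => V w ∘L adjoint (V ((starRingEnd ℂ) w)) with hf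
    -- continuity of `f` on the non-real points
    have hconjmaps : Set.MapsTo (starRingEnd ℂ) s s := fun w hw => by
      simpa [hs, Complex.conj_im] using hw
    have hVconj : ContinuousOn (fun w => V ((starRingEnd ℂ) w)) s :=
      hVcont.comp (RCLike.continuous_conj).continuousOn hconjmaps
    have hadjcont : Continuous
        (ContinuousLinearMap.adjoint : (K →L[ℂ] K) → (K →L[ℂ] K)) :=
      (ContinuousLinearMap.adjoint (𝕜 := ℂ) (E := K) (F := K)).continuous
    have hfOn : ContinuousOn f s :=
      hVcont.clm_comp (hadjcont.comp_continuousOn hVconj)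
    -- the approach filter is nontrivial
    have hsub : {w : ℂ | w ≠ z} ∩ Metric.ball z 1 ⊆ s' := by
      intro w hw
      have hdist : ‖w - z‖ < 1 := by
        simpa [Complex.dist_eq] using hw.2
      have him : |(w - z).im| < 1 := lt_of_le_of_lt (Complex.abs_im_le_norm _) hdist
      rcases hzi with h | h
      · have : |w.im - 1| < 1 := by simpa [h, Complex.sub_im, Complex.I_im] using him
        have hpos : 0 < w.im := by
          have := (abs_lt.mp this).1
          linarith
        refine ⟨ne_of_gt hpos, ?_, ?_⟩
        · rw [← h]; exact hw.1
        · intro hcon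
          rw [hcon] at hpos
          simp at hpos
          linarith
      · have : |w.im + 1| < 1 := by
          simpa [h, Complex.sub_im, Complex.neg_im, Complex.I_im, sub_neg_eq_add] using him
        have hneg : w.im < 0 := by
          have := (abs_lt.mp this).2
          linarith
        refine ⟨ne_of_lt hneg, ?_, ?_⟩
        · intro hcon
          rw [hcon] at hneg
          simp at hneg
          linarith
        · rw [← h]; exact hw.1
    have hball : 𝓝[{w : ℂ | w ≠ z} ∩ Metric.ball z 1] z = 𝓝[{w : ℂ | w ≠ z}] z :=
      nhdsWithin_inter_of_mem'
        (mem_nhdsWithin_of_mem_nhds (Metric.ball_mem_nhds z one_pos))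
    have hne' : (𝓝[{w : ℂ | w ≠ z} ∩ Metric.ball z 1] z).NeBot := by
      rw [hball]
      show (𝓝[≠] z).NeBot
      infer_instance
    have hne : (𝓝[s'] z).NeBot := hne'.mono (nhdsWithin_mono z hsub)
    -- take the limit
    have hzs : z ∈ s := hz
    have htend : Filter.Tendsto f (𝓝[s'] z) (𝓝 (f z)) :=
      (hfOn z hzs).mono_left (nhdsWithin_mono z fun w hw => hw.1)
    have hconst : Filter.Tendsto f (𝓝[s'] z) (𝓝 (1 : K →L[ℂ] K)) := by
      refine Filter.Tendsto.congr' ?_ tendsto_const_nhds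
      exact eventually_mem_nhdsWithin.mono fun w hw => (hval w hw).symm
    exact tendsto_nhds_unique htend hconst
  · push_neg at hzi
    exact stmt13_key Kmap Φ Φinv V hΦ hfact hKcont hVcont hΦcont hz hzi.1 hzi.2
end
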